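/- arXiv:2006.01136 — 5 statements merged into one kernel-verified Lean document; each statement's English description precedes it below -/
import Mathlib

section
/- Let d ≥ 2 and let k, j, ℓ ∈ ℤ^d \ {0} (with |·| the Euclidean norm). If |k| - |j| + |ℓ| ≠ 0, then 1/||k| - |j| + |ℓ|| ≤ 27 |j|² |ℓ|. -/
open scoped BigOperators

/-- Euclidean norm of a vector in `ℤ^d`. -/
noncomputable def zEnorm {d : ℕ} (k : Fin d → ℤ) : ℝ :=
  Real.sqrt (∑ i, ((k i : ℝ)) ^ 2)

lemma aux_one_le_sum {d : ℕ} (k : Fin d → ℤ) (hk : k ≠ 0) :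
    1 ≤ ∑ i, (k i) ^ 2 := by
  obtain ⟨i, hi⟩ := Function.ne_iff.mp hk
  have h1 : (1 : ℤ) ≤ (k i) ^ 2 := by
    have hi' : k i ≠ 0 := by simpa using hi
    have h2 := Int.one_le_abs hi'
    nlinarith [sq_abs (k i)]
  calc (1 : ℤ) ≤ (k i) ^ 2 := h1
    _ ≤ ∑ i, (k i) ^ 2 :=
      Finset.single_le_sum (fun i _ => sq_nonneg (k i)) (Finset.mem_univ i)

lemma aux_sq {d : ℕ} (k : Fin d → ℤ) :
    (zEnorm k) ^ 2 = ((∑ i, (k i) ^ 2 : ℤ) : ℝ) := by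
  unfold zEnorm
  rw [Real.sq_sqrt (by positivity)]
  push_cast
  ring

lemma aux_one_le {d : ℕ} (k : Fin d → ℤ) (hk : k ≠ 0) : 1 ≤ zEnorm k := by
  have h0 : (0:ℝ) ≤ zEnorm k := Real.sqrt_nonneg _
  have h2 : (1:ℝ) ≤ (zEnorm k) ^ 2 := by
    rw [aux_sq]
    exact_mod_cast aux_one_le_sum k hk
  nlinarith

theorem stmt0 {d : ℕ} (hd : 2 ≤ d) (k j l : Fin d → ℤ)
    (hk : k ≠ 0) (hj : j ≠ 0) (hl : l ≠ 0)
    (h : zEnorm k - zEnorm j + zEnorm l ≠ 0) :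
    1 / |zEnorm k - zEnorm j + zEnorm l| ≤ 27 * (zEnorm j) ^ 2 * zEnorm l := by
  set a := zEnorm k with hadef
  set b := zEnorm j with hbdef
  set c := zEnorm l with hcdef
  have ha1 : 1 ≤ a := aux_one_le k hk
  have hb1 : 1 ≤ b := aux_one_le j hj
  have hc1 : 1 ≤ c := aux_one_le l hl
  set x := a - b + c with hxdef
  have habs : 0 < |x| := abs_pos.mpr h
  rcases le_or_gt 1 |x| with hx | hx
  · have h1 : 1 / |x| ≤ 1 := by
      rw [div_le_one (by linarith)]; exact hx
    nlinarith
  · -- |x| < 1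
    set K : ℤ := ∑ i, (k i) ^ 2 with hKdef
    set J : ℤ := ∑ i, (j i) ^ 2 with hJdef
    set L : ℤ := ∑ i, (l i) ^ 2 with hLdef
    have ha2 : a ^ 2 = (K : ℝ) := aux_sq k
    have hb2 : b ^ 2 = (J : ℝ) := aux_sq j
    have hc2 : c ^ 2 = (L : ℝ) := aux_sq l
    set P : ℤ := (K + J - L) ^ 2 - 4 * K * J with hPdef
    have hP : (a + b + c) * (a + b - c) * x * (a - b - c) = (P : ℝ) := by
      have h1 : (a + b + c) * (a + b - c) * x * (a - b - c)
          = (a ^ 2 + b ^ 2 - c ^ 2) ^ 2 - 4 * a ^ 2 * b ^ 2 := by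
        rw [hxdef]; ring
      rw [h1, ha2, hb2, hc2, hPdef]
      push_cast
      ring
    have hxle : x ≤ |x| := le_abs_self x
    have hxge : -|x| ≤ x := neg_abs_le x
    have hP0 : P ≠ 0 := by
      intro h0
      have : (a + b + c) * (a + b - c) * x * (a - b - c) = 0 := by
        rw [hP, h0]; norm_num
      rcases mul_eq_zero.mp this with h1 | h4
      · rcases mul_eq_zero.mp h1 with h2 | h3
        · rcases mul_eq_zero.mp h2 with h5 | h6
          · linarith
          · -- a + b - c = 0, so x = 2a ≥ 2
            have : x = 2 * a := by rw [hxdef]; linarith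
            linarith
        · exact h h3
      · -- a - b - c = 0, so x = 2c ≥ 2
        have : x = 2 * c := by rw [hxdef]; linarith
        linarith
    have hPabs : (1 : ℝ) ≤ |(P : ℝ)| := by
      have := Int.one_le_abs hP0
      calc (1:ℝ) = ((1:ℤ):ℝ) := by norm_num
        _ ≤ ((|P| : ℤ) : ℝ) := by exact_mod_cast this
        _ = |(P : ℝ)| := by push_cast; ring
    -- bounds
    have hax : a ≤ b - c + |x| := by
      have : a = x + b - c := by rw [hxdef]; ring
      linarith
    have hb3 : a + b + c ≤ 3 * b := by linarith
    have hb3' : |a + b + c| ≤ 3 * b := by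
      rw [abs_of_pos (by linarith)]; exact hb3
    have hb4 : |a + b - c| ≤ 3 * b := by
      rw [abs_le]; constructor <;> linarith
    have hb5 : |a - b - c| ≤ 3 * c := by
      have : a - b - c = x - 2 * c := by rw [hxdef]; ring
      rw [this, abs_le]; constructor <;> linarith
    rw [div_le_iff₀ habs]
    calc (1:ℝ) ≤ |(P : ℝ)| := hPabs
      _ = |a + b + c| * |a + b - c| * |x| * |a - b - c| := by
          rw [← hP, abs_mul, abs_mul, abs_mul]
      _ ≤ (3 * b) * (3 * b) * |x| * (3 * c) := by
          gcongr <;> positivity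
      _ = 27 * b ^ 2 * c * |x| := by ring
end

section
/- Let d ≥ 2 and let k, j, ℓ ∈ ℤ^d \ {0} (with |·| the Euclidean norm). If |k| - |j| - |ℓ| ≠ 0, then 1/||k| - |j| - |ℓ|| ≤ 27 |j| |ℓ| (|j| + |ℓ|). -/
open scoped BigOperators

lemma enorm_sq_real {d : ℕ} (k : Fin d → ℤ) :
    (zEnorm k) ^ 2 = ∑ i, ((k i : ℝ)) ^ 2 := by
  have hnn : (0:ℝ) ≤ ∑ i, ((k i : ℝ)) ^ 2 :=
    Finset.sum_nonneg fun i _ => sq_nonneg _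
  rw [zEnorm, Real.sq_sqrt hnn]

lemma enorm_nonneg' {d : ℕ} (k : Fin d → ℤ) : 0 ≤ zEnorm k := Real.sqrt_nonneg _

lemma one_le_enorm {d : ℕ} {k : Fin d → ℤ} (hk : k ≠ 0) : 1 ≤ zEnorm k := by
  obtain ⟨i, hi⟩ := Function.ne_iff.mp hk
  have hi' : (1:ℝ) ≤ ((k i : ℝ)) ^ 2 := by
    have h1 : (1:ℤ) ≤ (k i) ^ 2 := by
      nlinarith [sq_nonneg (k i), Int.one_le_abs hi, sq_abs (k i)]
    exact_mod_cast (by exact_mod_cast h1 : (1:ℝ) ≤ (((k i)^2 : ℤ) : ℝ))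
  have h1 : (1:ℝ) ≤ (zEnorm k) ^ 2 := by
    rw [enorm_sq_real]
    calc (1:ℝ) ≤ ((k i : ℝ)) ^ 2 := hi'
      _ ≤ ∑ i, ((k i : ℝ)) ^ 2 :=
        Finset.single_le_sum (f := fun i => ((k i : ℝ)) ^ 2)
          (fun i _ => sq_nonneg _) (Finset.mem_univ i)
  nlinarith [enorm_nonneg' k]

lemma key_real (x b c : ℝ) (n : ℤ) (hx : x ≠ 0) (hb1 : 1 ≤ b) (hc1 : 1 ≤ c)
    (hprod : (n : ℝ) = x * ((x + 2*b + 2*c) * ((x + 2*b) * (x + 2*c)))) :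
    1 / |x| ≤ 27 * b * c * (b + c) := by
  have hxabs : 0 < |x| := abs_pos.mpr hx
  have h54 : (54:ℝ) ≤ 27 * b * c * (b + c) := by
    nlinarith [mul_nonneg (sub_nonneg.mpr hb1) (sub_nonneg.mpr hc1),
      mul_nonneg (mul_nonneg (sub_nonneg.mpr hb1) (sub_nonneg.mpr hc1))
        (by linarith : (0:ℝ) ≤ b + c)]
  rcases le_or_gt 1 |x| with h1 | h1
  · have hle : 1 / |x| ≤ 1 := by rw [div_le_one hxabs]; exact h1
    linarith
  · have hxlt : x < 1 := lt_of_le_of_lt (le_abs_self x) h1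
    have hxgt : -1 < x := neg_lt_of_abs_lt h1
    have hp1 : 0 < x + 2*b + 2*c := by nlinarith
    have hp2 : 0 < x + 2*b := by nlinarith
    have hp3 : 0 < x + 2*c := by nlinarith
    have hppos : 0 < (x + 2*b + 2*c) * ((x + 2*b) * (x + 2*c)) :=
      mul_pos hp1 (mul_pos hp2 hp3)
    have hn0 : n ≠ 0 := by
      intro h0
      rw [h0] at hprod
      simp only [Int.cast_zero] at hprod
      rcases mul_eq_zero.mp hprod.symm with h' | h'
      · exact hx h'
      · linarith
    have hn1 : (1:ℝ) ≤ |(n:ℝ)| := by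
      rw [← Int.cast_abs]
      exact_mod_cast Int.one_le_abs hn0
    have habs : |(n:ℝ)| = |x| * ((x + 2*b + 2*c) * ((x + 2*b) * (x + 2*c))) := by
      rw [hprod, abs_mul, abs_of_pos hppos]
    have hbound : |(n:ℝ)| ≤ |x| * (27 * b * c * (b + c)) := by
      rw [habs]
      have e1 : x + 2*b + 2*c ≤ 3*(b+c) := by nlinarith
      have e2 : x + 2*b ≤ 3*b := by nlinarith
      have e3 : x + 2*c ≤ 3*c := by nlinarith
      have h2 : (x + 2*b + 2*c) * ((x + 2*b) * (x + 2*c)) ≤ 3*(b+c) * (3*b * (3*c)) := by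
        have hstep : (x + 2*b) * (x + 2*c) ≤ 3*b * (3*c) :=
          mul_le_mul e2 e3 (le_of_lt hp3) (by positivity)
        calc (x + 2*b + 2*c) * ((x + 2*b) * (x + 2*c))
            ≤ 3*(b+c) * ((x + 2*b) * (x + 2*c)) :=
              mul_le_mul_of_nonneg_right e1 (le_of_lt (mul_pos hp2 hp3))
          _ ≤ 3*(b+c) * (3*b * (3*c)) :=
              mul_le_mul_of_nonneg_left hstep (by positivity)
      calc |x| * ((x + 2*b + 2*c) * ((x + 2*b) * (x + 2*c)))
          ≤ |x| * (3*(b+c) * (3*b * (3*c))) :=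
            mul_le_mul_of_nonneg_left h2 (abs_nonneg x)
        _ = |x| * (27 * b * c * (b + c)) := by ring
    have hkey : 1 ≤ |x| * (27 * b * c * (b + c)) := le_trans hn1 hbound
    rw [div_le_iff₀ hxabs]
    nlinarith [hkey]

theorem stmt1 {d : ℕ} (hd : 2 ≤ d) (k j l : Fin d → ℤ)
    (hk : k ≠ 0) (hj : j ≠ 0) (hl : l ≠ 0)
    (h : zEnorm k - zEnorm j - zEnorm l ≠ 0) :
    1 / |zEnorm k - zEnorm j - zEnorm l| ≤ 27 * zEnorm j * zEnorm l * (zEnorm j + zEnorm l) := by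
  have hb1 : 1 ≤ zEnorm j := one_le_enorm hj
  have hc1 : 1 ≤ zEnorm l := one_le_enorm hl
  have hprod : ((((∑ i, (k i)^2) + (∑ i, (j i)^2) - (∑ i, (l i)^2))^2
      - 4 * (∑ i, (k i)^2) * (∑ i, (j i)^2) : ℤ) : ℝ)
      = (zEnorm k - zEnorm j - zEnorm l) *
        (((zEnorm k - zEnorm j - zEnorm l) + 2*(zEnorm j) + 2*(zEnorm l)) *
          (((zEnorm k - zEnorm j - zEnorm l) + 2*(zEnorm j)) *
            ((zEnorm k - zEnorm j - zEnorm l) + 2*(zEnorm l)))) := by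
    push_cast
    rw [← enorm_sq_real k, ← enorm_sq_real j, ← enorm_sq_real l]
    ring
  have := key_real (zEnorm k - zEnorm j - zEnorm l) (zEnorm j) (zEnorm l) _ h hb1 hc1 hprod
  calc 1 / |zEnorm k - zEnorm j - zEnorm l|
      ≤ 27 * zEnorm j * zEnorm l * (zEnorm j + zEnorm l) := this
end

section
/- For every natural number n ≥ 1, if each of n, n+1, and 4n+2 is a sum of two squares of integers, then each of 2n²+2n, 2n²+2n+1, and 4(2n²+2n)+2 is also a sum of two squares. Consequently, there are infinitely many n ∈ ℕ such that n, n+1 and 4n+2 are all sums of two squares (e.g. starting from n = 4, since 4 = 2²+0², 5 = 2²+1², 18 = 3²+3²). -/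
/-- A natural number is a sum of two squares of integers. -/
def IsSumTwoSq (n : ℕ) : Prop := ∃ x y : ℤ, (n : ℤ) = x ^ 2 + y ^ 2

lemma key (n : ℕ) (h1 : IsSumTwoSq n) (h2 : IsSumTwoSq (n + 1)) :
    IsSumTwoSq (2 * n ^ 2 + 2 * n) ∧ IsSumTwoSq (2 * n ^ 2 + 2 * n + 1) ∧
      IsSumTwoSq (4 * (2 * n ^ 2 + 2 * n) + 2) := by
  obtain ⟨x, y, hxy⟩ := h1
  obtain ⟨z, w, hzw⟩ := h2
  refine ⟨⟨(x*z+y*w)+(x*w-y*z), (x*z+y*w)-(x*w-y*z), ?_⟩,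
    ⟨(n : ℤ), (n : ℤ) + 1, by push_cast; ring⟩,
    ⟨2*(n : ℤ)+1, 2*(n : ℤ)+1, by push_cast; ring⟩⟩
  have : ((2 * n ^ 2 + 2 * n : ℕ) : ℤ) = 2 * ((n : ℤ) * ((n : ℤ) + 1)) := by
    push_cast; ring
  push_cast at hzw
  rw [this, hzw, hxy]
  ring

theorem stmt3 :
    (∀ n : ℕ, 1 ≤ n →
      IsSumTwoSq n → IsSumTwoSq (n + 1) → IsSumTwoSq (4 * n + 2) →
      IsSumTwoSq (2 * n ^ 2 + 2 * n) ∧ IsSumTwoSq (2 * n ^ 2 + 2 * n + 1) ∧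
        IsSumTwoSq (4 * (2 * n ^ 2 + 2 * n) + 2)) ∧
    {n : ℕ | IsSumTwoSq n ∧ IsSumTwoSq (n + 1) ∧ IsSumTwoSq (4 * n + 2)}.Infinite := by
  constructor
  · intro n _ h1 h2 _
    exact key n h1 h2
  · set S := {n : ℕ | IsSumTwoSq n ∧ IsSumTwoSq (n + 1) ∧ IsSumTwoSq (4 * n + 2)}
    let g : ℕ → ℕ := fun k => Nat.rec 4 (fun _ m => 2 * m ^ 2 + 2 * m) k
    have hge : ∀ k, 1 ≤ g k := by
      intro k
      induction k with
      | zero => norm_num [g]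
      | succ k ih => simp only [g] at ih ⊢; nlinarith
    have hmem : ∀ k, g k ∈ S := by
      intro k
      induction k with
      | zero =>
        refine ⟨⟨2, 0, by norm_num [g]⟩, ⟨2, 1, by norm_num [g]⟩, ⟨3, 3, by norm_num [g]⟩⟩
      | succ k ih =>
        obtain ⟨h1, h2, _⟩ := ih
        obtain ⟨a, b, c⟩ := key (g k) h1 h2
        exact ⟨a, b, c⟩
    have hmono : StrictMono g := by
      apply strictMono_nat_of_lt_succ
      intro k
      have := hge k
      show g k < 2 * (g k) ^ 2 + 2 * (g k)
      nlinarith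
    exact Set.infinite_of_injective_forall_mem hmono.injective hmem
end

section
/- Define, for zero-mean functions u, v, h on 𝕋^d, the operator A₁₂[u,v]h := Σ_{j,k ≠ 0, |j|≠|k|} u_j v_{-j} (|j|²/(8(|j|-|k|))) h_k e^{ik·x}, and let m₀ = 1 if d = 1 and m₀ = 3/2 if d ≥ 2. Then for all real s ≥ 0, ‖A₁₂[u,v]h‖_s ≤ (3/8) ‖u‖_{m₀} ‖v‖_{m₀} ‖h‖_s. -/
open scoped BigOperators

/-- Euclidean norm of a vector in `ℤ^d`. -/
noncomputable def enorm' {d : ℕ} (k : Fin d → ℤ) : ℝ :=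
  Real.sqrt (∑ i, ((k i : ℝ)) ^ 2)

/-- Sobolev norm `‖u‖_s`. -/
noncomputable def snorm {d : ℕ} (s : ℝ) (u : (Fin d → ℤ) →₀ ℂ) : ℝ :=
  Real.sqrt (∑ j ∈ u.support, ‖u j‖ ^ 2 * enorm' j ^ (2 * s))

/-- The operator `A₁₂[u,v]h`, given on Fourier coefficients by
`(A₁₂[u,v]h)_k = (Σ_{j : |j|≠|k|} u_j v_{-j} |j|²/(8(|j|-|k|))) h_k`. -/
noncomputable def A12 {d : ℕ} (u v h : (Fin d → ℤ) →₀ ℂ) : (Fin d → ℤ) →₀ ℂ :=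
  Finsupp.onFinset h.support
    (fun k => (∑ j ∈ u.support,
        if enorm' j ≠ enorm' k then
          u j * v (-j) * (((enorm' j ^ 2 / (8 * (enorm' j - enorm' k))) : ℝ) : ℂ)
        else 0) * h k)
    (fun k hk => Finsupp.mem_support_iff.2 fun h0 => hk (by simp [h0]))

/-- `m₀ = 1` if `d = 1`, `m₀ = 3/2` if `d ≥ 2`. -/
noncomputable def m0 (d : ℕ) : ℝ := if d = 1 then 1 else 3 / 2

lemma enorm_nonneg'_s10 {d : ℕ} (j : Fin d → ℤ) : 0 ≤ enorm' j := Real.sqrt_nonneg _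

lemma enorm_sq_eq {d : ℕ} (j : Fin d → ℤ) : enorm' j ^ 2 = ((∑ i, (j i)^2 : ℤ) : ℝ) := by
  rw [enorm', Real.sq_sqrt (by positivity)]
  push_cast; rfl

lemma enorm_neg' {d : ℕ} (j : Fin d → ℤ) : enorm' (-j) = enorm' j := by
  simp [enorm']

lemma one_le_enorm_s10 {d : ℕ} {j : Fin d → ℤ} (hj : j ≠ 0) : 1 ≤ enorm' j := by
  have h1 : (1:ℤ) ≤ ∑ i, (j i)^2 := by
    have hex : ∃ i, j i ≠ 0 := by
      by_contra hc; push_neg at hc; exact hj (funext hc)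
    obtain ⟨i, hi⟩ := hex
    have h2 : (1:ℤ) ≤ (j i)^2 := by nlinarith [sq_abs (j i), Int.one_le_abs hi]
    calc (1:ℤ) ≤ (j i)^2 := h2
      _ ≤ ∑ i, (j i)^2 :=
        Finset.single_le_sum (fun i _ => sq_nonneg (j i)) (Finset.mem_univ i)
  have h2 : (1:ℝ) ≤ enorm' j ^ 2 := by rw [enorm_sq_eq]; exact_mod_cast h1
  nlinarith [enorm_nonneg'_s10 j]

lemma gap_bound {d : ℕ} {j k : Fin d → ℤ} (hj : j ≠ 0) (hk : k ≠ 0)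
    (hne : enorm' j ≠ enorm' k) : 1 ≤ |enorm' j - enorm' k| * (enorm' j + enorm' k) := by
  have ha1 : 1 ≤ enorm' j := one_le_enorm_s10 hj
  have hb1 : 1 ≤ enorm' k := one_le_enorm_s10 hk
  have heq : enorm' j ^ 2 - enorm' k ^ 2 = (((∑ i, (j i)^2) - ∑ i, (k i)^2 : ℤ) : ℝ) := by
    rw [enorm_sq_eq, enorm_sq_eq]; push_cast; ring
  have hne2 : ((∑ i, (j i)^2) - ∑ i, (k i)^2 : ℤ) ≠ 0 := by
    intro h0
    apply hne
    have hsq : enorm' j ^ 2 = enorm' k ^ 2 := by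
      have := heq; rw [h0] at this; push_cast at this; linarith
    calc enorm' j = Real.sqrt (enorm' j ^ 2) := (Real.sqrt_sq (by linarith)).symm
      _ = Real.sqrt (enorm' k ^ 2) := by rw [hsq]
      _ = enorm' k := Real.sqrt_sq (by linarith)
  have h1 : (1:ℝ) ≤ |enorm' j ^ 2 - enorm' k ^ 2| := by
    rw [heq, ← Int.cast_abs]; exact_mod_cast Int.one_le_abs hne2
  have h2 : enorm' j ^ 2 - enorm' k ^ 2 = (enorm' j - enorm' k) * (enorm' j + enorm' k) := by ring
  rw [h2, abs_mul, abs_of_pos (show (0:ℝ) < enorm' j + enorm' k by linarith)] at h1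
  exact h1

lemma enorm_d1 (j : Fin 1 → ℤ) : enorm' j = ((|j 0| : ℤ) : ℝ) := by
  rw [enorm', Fin.sum_univ_one, Real.sqrt_sq_eq_abs]
  push_cast; rfl

lemma gap_one {j k : Fin 1 → ℤ} (hne : enorm' j ≠ enorm' k) : 1 ≤ |enorm' j - enorm' k| := by
  rw [enorm_d1, enorm_d1] at hne ⊢
  rw [← Int.cast_sub, ← Int.cast_abs]
  have : |j 0| - |k 0| ≠ 0 := by
    intro h0; exact hne (by exact_mod_cast sub_eq_zero.mp h0)
  exact_mod_cast Int.one_le_abs this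

lemma key_bound {d : ℕ} {j k : Fin d → ℤ} (hj : j ≠ 0) (hk : k ≠ 0)
    (hne : enorm' j ≠ enorm' k) :
    enorm' j ^ 2 / (8 * |enorm' j - enorm' k|) ≤ (3/8) * enorm' j ^ (2 * m0 d) := by
  have ha1 : 1 ≤ enorm' j := one_le_enorm_s10 hj
  have hb1 : 1 ≤ enorm' k := one_le_enorm_s10 hk
  have habpos : 0 < |enorm' j - enorm' k| := abs_pos.2 (sub_ne_zero.2 hne)
  set a := enorm' j
  set b := enorm' k
  rcases eq_or_ne d 1 with hd1 | hd1
  · subst hd1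
    have hone : 1 ≤ |a - b| := gap_one hne
    have hm : (2 : ℝ) * m0 1 = ((2:ℕ):ℝ) := by simp [m0]
    rw [hm, Real.rpow_natCast]
    rw [div_le_iff₀ (by positivity)]
    nlinarith [mul_le_mul_of_nonneg_left hone (by positivity : (0:ℝ) ≤ 3 * a^2), sq_nonneg a]
  · have hgap : 1 ≤ |a - b| * (a + b) := gap_bound hj hk hne
    have hm : (2 : ℝ) * m0 d = ((3:ℕ):ℝ) := by simp [m0, hd1]; norm_num
    rw [hm, Real.rpow_natCast]
    rw [div_le_iff₀ (by positivity)]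
    rcases le_or_gt 1 |a - b| with hone | hlt
    · nlinarith [mul_le_mul_of_nonneg_left hone (by positivity : (0:ℝ) ≤ 3 * a^3), sq_nonneg a]
    · have hb2 : b ≤ a + |a - b| := by
        rcases abs_cases (a - b) with ⟨he, _⟩ | ⟨he, _⟩ <;> linarith
      have h3a : a + b ≤ 3 * a := by linarith
      nlinarith [mul_le_mul_of_nonneg_left hgap (sq_nonneg a),
        mul_le_mul_of_nonneg_left h3a (mul_nonneg (sq_nonneg a) (abs_nonneg (a - b)))]

lemma snorm_nonneg' {d : ℕ} (s : ℝ) (u : (Fin d → ℤ) →₀ ℂ) : 0 ≤ snorm s u :=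
  Real.sqrt_nonneg _

lemma snorm_sq {d : ℕ} (s : ℝ) (u : (Fin d → ℤ) →₀ ℂ) :
    snorm s u ^ 2 = ∑ j ∈ u.support, ‖u j‖ ^ 2 * enorm' j ^ (2 * s) := by
  rw [snorm, Real.sq_sqrt]
  refine Finset.sum_nonneg fun j _ => ?_
  have := enorm_nonneg'_s10 j
  positivity

lemma rpow_m0_sq {d : ℕ} (j : Fin d → ℤ) :
    (enorm' j ^ (m0 d)) ^ 2 = enorm' j ^ (2 * m0 d) := by
  rw [← Real.rpow_natCast (enorm' j ^ (m0 d)) 2, ← Real.rpow_mul (enorm_nonneg'_s10 j)]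
  norm_num [mul_comm]

lemma coeff_bound {d : ℕ} (u v : (Fin d → ℤ) →₀ ℂ) (hu : u 0 = 0)
    {k : Fin d → ℤ} (hk : k ≠ 0) :
    ‖∑ j ∈ u.support, if enorm' j ≠ enorm' k then
        u j * v (-j) * (((enorm' j ^ 2 / (8 * (enorm' j - enorm' k))) : ℝ) : ℂ) else 0‖
      ≤ 3 / 8 * snorm (m0 d) u * snorm (m0 d) v := by
  set f : (Fin d → ℤ) → ℝ := fun j => ‖u j‖ * enorm' j ^ (m0 d) with hf
  set g : (Fin d → ℤ) → ℝ := fun j => ‖v (-j)‖ * enorm' j ^ (m0 d) with hg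
  have hfnn : ∀ j, 0 ≤ f j := fun j => by
    have := enorm_nonneg'_s10 j; rw [hf]; positivity
  have hgnn : ∀ j, 0 ≤ g j := fun j => by
    have := enorm_nonneg'_s10 j; rw [hg]; positivity
  have step1 : ‖∑ j ∈ u.support, if enorm' j ≠ enorm' k then
        u j * v (-j) * (((enorm' j ^ 2 / (8 * (enorm' j - enorm' k))) : ℝ) : ℂ) else 0‖
      ≤ ∑ j ∈ u.support, (3/8) * (f j * g j) := by
    refine (norm_sum_le _ _).trans (Finset.sum_le_sum fun j hj => ?_)
    have hj0 : j ≠ 0 := fun h0 => by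
      simp [h0, hu] at hj
    by_cases hne : enorm' j ≠ enorm' k
    · rw [if_pos hne]
      have h1 : 1 ≤ enorm' j := one_le_enorm_s10 hj0
      rw [norm_mul, norm_mul, Complex.norm_real, Real.norm_eq_abs]
      have habs : |enorm' j ^ 2 / (8 * (enorm' j - enorm' k))|
          = enorm' j ^ 2 / (8 * |enorm' j - enorm' k|) := by
        rw [abs_div, abs_mul, abs_of_nonneg (by positivity : (0:ℝ) ≤ enorm' j ^ 2)]
        norm_num
      have hkey := key_bound hj0 hk hne
      have hsplit : enorm' j ^ (2 * m0 d) = enorm' j ^ (m0 d) * enorm' j ^ (m0 d) := by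
        rw [← Real.rpow_add (by linarith : (0:ℝ) < enorm' j)]; ring_nf
      calc ‖u j‖ * ‖v (-j)‖ * |enorm' j ^ 2 / (8 * (enorm' j - enorm' k))|
            ≤ ‖u j‖ * ‖v (-j)‖ * ((3/8) * enorm' j ^ (2 * m0 d)) := by
              rw [habs]
              exact mul_le_mul_of_nonneg_left hkey (by positivity)
        _ = (3/8) * (f j * g j) := by rw [hsplit, hf, hg]; ring
    · rw [if_neg hne]
      simp only [norm_zero]
      have := mul_nonneg (hfnn j) (hgnn j); positivity
  have cs : ∑ j ∈ u.support, f j * g j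
      ≤ Real.sqrt (∑ j ∈ u.support, f j ^ 2) * Real.sqrt (∑ j ∈ u.support, g j ^ 2) := by
    have h2 := Finset.sum_mul_sq_le_sq_mul_sq u.support f g
    have hnn : 0 ≤ ∑ j ∈ u.support, f j * g j :=
      Finset.sum_nonneg fun j _ => mul_nonneg (hfnn j) (hgnn j)
    calc ∑ j ∈ u.support, f j * g j
        = Real.sqrt ((∑ j ∈ u.support, f j * g j) ^ 2) := (Real.sqrt_sq hnn).symm
      _ ≤ Real.sqrt ((∑ j ∈ u.support, f j ^ 2) * ∑ j ∈ u.support, g j ^ 2) :=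
          Real.sqrt_le_sqrt h2
      _ = _ := Real.sqrt_mul (Finset.sum_nonneg fun j _ => sq_nonneg _) _
  have hfsum : ∑ j ∈ u.support, f j ^ 2 = snorm (m0 d) u ^ 2 := by
    rw [snorm_sq]
    refine Finset.sum_congr rfl fun j _ => ?_
    rw [hf, mul_pow, rpow_m0_sq]
  have hgsum : ∑ j ∈ u.support, g j ^ 2 ≤ snorm (m0 d) v ^ 2 := by
    rw [snorm_sq]
    set G : (Fin d → ℤ) → ℝ := fun j => ‖v j‖ ^ 2 * enorm' j ^ (2 * m0 d) with hG
    have hGnn : ∀ j, 0 ≤ G j := fun j => by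
      have := enorm_nonneg'_s10 j; rw [hG]; positivity
    have h1 : ∑ j ∈ u.support, g j ^ 2
        = ∑ j ∈ u.support.map ⟨Neg.neg, neg_injective⟩, G j := by
      rw [Finset.sum_map]
      refine Finset.sum_congr rfl fun j _ => ?_
      simp only [Function.Embedding.coeFn_mk, hG, hg]
      rw [mul_pow, rpow_m0_sq, enorm_neg']
    rw [h1]
    set T := u.support.map ⟨Neg.neg, neg_injective⟩
    calc ∑ j ∈ T, G j ≤ ∑ j ∈ T ∪ v.support, G j :=
          Finset.sum_le_sum_of_subset_of_nonneg Finset.subset_union_left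
            (fun j _ _ => hGnn j)
      _ = ∑ j ∈ v.support, G j := by
          refine (Finset.sum_subset Finset.subset_union_right fun x _ hx => ?_).symm
          have : v x = 0 := Finsupp.notMem_support_iff.mp hx
          rw [hG]; simp [this]
  calc ‖_‖ ≤ ∑ j ∈ u.support, (3/8) * (f j * g j) := step1
    _ = (3/8) * ∑ j ∈ u.support, f j * g j := by rw [Finset.mul_sum]
    _ ≤ (3/8) * (Real.sqrt (∑ j ∈ u.support, f j ^ 2) * Real.sqrt (∑ j ∈ u.support, g j ^ 2)) := by
        exact mul_le_mul_of_nonneg_left cs (by norm_num)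
    _ ≤ (3/8) * (snorm (m0 d) u * snorm (m0 d) v) := by
        refine mul_le_mul_of_nonneg_left ?_ (by norm_num)
        refine mul_le_mul ?_ ?_ (Real.sqrt_nonneg _) (snorm_nonneg' _ _)
        · rw [hfsum, Real.sqrt_sq (snorm_nonneg' _ _)]
        · exact (Real.sqrt_le_sqrt hgsum).trans
            (le_of_eq (Real.sqrt_sq (snorm_nonneg' _ _)))
    _ = 3 / 8 * snorm (m0 d) u * snorm (m0 d) v := by ring

theorem stmt10 {d : ℕ} (hd : 1 ≤ d) (u v h : (Fin d → ℤ) →₀ ℂ)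
    (hu : u 0 = 0) (hv : v 0 = 0) (hh : h 0 = 0) :
    ∀ s : ℝ, 0 ≤ s →
      snorm s (A12 u v h) ≤ (3 / 8) * snorm (m0 d) u * snorm (m0 d) v * snorm s h := by
  intro s hs
  set C := 3 / 8 * snorm (m0 d) u * snorm (m0 d) v with hCdef
  have hC0 : 0 ≤ C := by
    rw [hCdef]
    have := snorm_nonneg' (m0 d) u
    have := snorm_nonneg' (m0 d) v
    positivity
  have hsub : (A12 u v h).support ⊆ h.support := Finsupp.support_onFinset_subset
  have hsum : ∑ k ∈ (A12 u v h).support, ‖(A12 u v h) k‖ ^ 2 * enorm' k ^ (2 * s)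
      ≤ C ^ 2 * ∑ k ∈ h.support, ‖h k‖ ^ 2 * enorm' k ^ (2 * s) := by
    rw [Finset.mul_sum]
    refine (Finset.sum_le_sum_of_subset_of_nonneg hsub fun k _ _ => by
      have := enorm_nonneg'_s10 k; positivity).trans (Finset.sum_le_sum fun k hkk => ?_)
    have hk0 : k ≠ 0 := fun h0 => by
      rw [h0] at hkk
      exact Finsupp.mem_support_iff.mp hkk hh
    have happ : (A12 u v h) k = (∑ j ∈ u.support,
        if enorm' j ≠ enorm' k then
          u j * v (-j) * (((enorm' j ^ 2 / (8 * (enorm' j - enorm' k))) : ℝ) : ℂ)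
        else 0) * h k := rfl
    rw [happ, norm_mul, mul_pow, mul_assoc]
    refine mul_le_mul_of_nonneg_right ?_ (by have := enorm_nonneg'_s10 k; positivity)
    exact pow_le_pow_left₀ (norm_nonneg _) (coeff_bound u v hu hk0) 2
  have key : snorm s (A12 u v h) ≤ C * snorm s h := by
    rw [snorm, snorm]
    calc Real.sqrt (∑ k ∈ (A12 u v h).support,
            ‖(A12 u v h) k‖ ^ 2 * enorm' k ^ (2 * s))
        ≤ Real.sqrt (C ^ 2 * ∑ k ∈ h.support, ‖h k‖ ^ 2 * enorm' k ^ (2 * s)) :=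
          Real.sqrt_le_sqrt hsum
      _ = C * Real.sqrt (∑ k ∈ h.support, ‖h k‖ ^ 2 * enorm' k ^ (2 * s)) := by
          rw [Real.sqrt_mul (sq_nonneg C), Real.sqrt_sq hC0]
  rw [hCdef] at key
  exact key
end

section
/- Let K be a linear operator on a Banach space satisfying, for two norms ‖·‖_s and ‖·‖_{m} (with ‖·‖_m ≤ ‖·‖_s-type compatibility): ‖Kα‖_s ≤ ε(a‖α‖_s + b‖α‖_m) for parameters with ε(a+b) ≤ 1/2. Then I + K is invertible with (I+K)^{-1} = I - K + Σ_{n≥2}(-K)^n and ‖(I+K)^{-1}α‖_s ≤ C(‖α‖_s + ε b ‖α‖_m) for a universal constant C. In the concrete setting: if ‖K(w,z)(α,β)‖_s ≤ (7/16)‖w‖_{m₀}²‖α‖_s + (7/8)‖w‖_{m₀}‖w‖_s‖α‖_{m₀} for all s ≥ 0, and ‖w‖_{m₀} < 1/2, then I + K(w,z) is invertible on H^{m₀}₀ and ‖(I+K(w,z))^{-1}(α,β)‖_s ≤ C(‖α‖_s + ‖w‖_{m₀}‖w‖_s‖α‖_{m₀}). -/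
/-- Neumann-series inversion of `I + K` with tame two-norm estimates, as in
Lemma 4.2 of [Kold]: there is a universal constant `C` such that, for any space `V`
(complete in the base norm `N m₀ = ‖·‖`), any family of seminorms `N s`, any
"profile" `W` (playing the role of `s ↦ ‖w‖_s`), and any operator `K` with
`N s (K α) ≤ (7/16)‖w‖_{m₀}² N s α + (7/8)‖w‖_{m₀}‖w‖_s N m₀ α` and `‖w‖_{m₀} < 1/2`,
the operator `I + K` is invertible and
`N s ((I+K)⁻¹ α) ≤ C (N s α + ‖w‖_{m₀}‖w‖_s N m₀ α)`. -/
theorem stmt17 :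
    ∃ C : ℝ, 0 < C ∧
    ∀ (V : Type) [NormedAddCommGroup V] [NormedSpace ℂ V] [CompleteSpace V],
    ∀ (N : ℝ → V → ℝ) (W : ℝ → ℝ) (m₀ : ℝ) (K : V →L[ℂ] V),
      0 ≤ m₀ →
      (∀ s α, 0 ≤ N s α) →
      (∀ s, 0 ≤ W s) →
      (∀ α, N m₀ α = ‖α‖) →
      (∀ s α β, N s (α + β) ≤ N s α + N s β) →
      (∀ s (c : ℂ) α, N s (c • α) = ‖c‖ * N s α) →
      (∀ s, LowerSemicontinuous (N s)) →
      (∀ s, 0 ≤ s → ∀ α,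
        N s (K α) ≤ 7 / 16 * (W m₀) ^ 2 * N s α + 7 / 8 * W m₀ * W s * N m₀ α) →
      W m₀ < 1 / 2 →
      ∃ L : V →L[ℂ] V,
        (∀ α, L (α + K α) = α) ∧ (∀ α, L α + K (L α) = α) ∧
        ∀ s, 0 ≤ s → ∀ α, N s (L α) ≤ C * (N s α + W m₀ * W s * N m₀ α) := by
  refine ⟨2, by norm_num, ?_⟩
  intro V _ _ _ N W m₀ K hm₀ hNpos hWpos hNm hNadd hNsmul _hlsc hK hsmall
  set a := W m₀ with ha
  have ha0 : 0 ≤ a := hWpos m₀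
  -- norm bound on K
  have hKn : ∀ α : V, ‖K α‖ ≤ 21 / 64 * ‖α‖ := by
    intro α
    have h := hK m₀ hm₀ α
    rw [hNm, hNm, ← ha] at h
    have hα : 0 ≤ ‖α‖ := norm_nonneg α
    have ha4 : a ^ 2 ≤ 1 / 4 := by nlinarith
    nlinarith [mul_le_mul_of_nonneg_right ha4 hα]
  have hnormK : ‖-K‖ < 1 := by
    rw [norm_neg]
    have : ‖K‖ ≤ 21 / 64 := K.opNorm_le_bound (by norm_num) hKn
    linarith
  set u : (V →L[ℂ] V)ˣ := Units.oneSub (-K) hnormK with hu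
  have huval : (u : V →L[ℂ] V) = 1 + K := by
    simp [hu, Units.oneSub, sub_neg_eq_add]
  refine ⟨(↑u⁻¹ : V →L[ℂ] V), ?_, ?_, ?_⟩
  · intro α
    have : ((↑u⁻¹ * ↑u : V →L[ℂ] V)) α = α := by rw [u.inv_mul]; rfl
    simpa [huval, ContinuousLinearMap.mul_apply] using this
  · intro α
    have : ((↑u * ↑u⁻¹ : V →L[ℂ] V)) α = α := by rw [u.mul_inv]; rfl
    simpa [huval, ContinuousLinearMap.mul_apply, ContinuousLinearMap.add_apply] using this
  · -- the estimate
    have hright : ∀ α : V, (↑u⁻¹ : V →L[ℂ] V) α + K ((↑u⁻¹ : V →L[ℂ] V) α) = α := by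
      intro α
      have : ((↑u * ↑u⁻¹ : V →L[ℂ] V)) α = α := by rw [u.mul_inv]; rfl
      simpa [huval, ContinuousLinearMap.mul_apply, ContinuousLinearMap.add_apply] using this
    have hLn : ∀ α : V, ‖(↑u⁻¹ : V →L[ℂ] V) α‖ ≤ 64 / 43 * ‖α‖ := by
      intro α
      set L := (↑u⁻¹ : V →L[ℂ] V)
      have h1 : L α = α - K (L α) := eq_sub_of_add_eq (hright α)
      have h2 := norm_sub_le α (K (L α))
      rw [← h1] at h2
      have h3 := hKn (L α)
      linarith
    intro s hs α
    set L := (↑u⁻¹ : V →L[ℂ] V)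
    have h1 : L α = α + (-1 : ℂ) • (K (L α)) := by
      rw [neg_one_smul, ← sub_eq_add_neg]
      exact eq_sub_of_add_eq (hright α)
    have h2 : N s (L α) ≤ N s α + N s (K (L α)) := by
      calc N s (L α) = N s (α + (-1 : ℂ) • (K (L α))) := by rw [← h1]
        _ ≤ N s α + N s ((-1 : ℂ) • (K (L α))) := hNadd _ _ _
        _ = N s α + N s (K (L α)) := by rw [hNsmul]; simp
    have h3 := hK s hs (L α)
    rw [hNm] at h3
    have h4 := hLn α
    have h5 : ‖α‖ = N m₀ α := (hNm α).symm
    rw [h5] at h4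
    have hx : 0 ≤ N s (L α) := hNpos s _
    have hy : 0 ≤ N s α := hNpos s α
    have hz : 0 ≤ N m₀ α := hNpos m₀ α
    have hWs : 0 ≤ W s := hWpos s
    have hLα : 0 ≤ ‖L α‖ := norm_nonneg _
    have ha4 : a ^ 2 ≤ 1 / 4 := by nlinarith
    nlinarith [mul_nonneg (mul_nonneg ha0 hWs) hz,
      mul_le_mul_of_nonneg_right ha4 hx,
      mul_le_mul_of_nonneg_left h4 (mul_nonneg ha0 hWs)]
end
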